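/- If r·cos θ ≤ ε < r, then the complement ℝ³ \ S_ε has exactly one connected component that is a bounded set, and the origin (0,0,0) belongs to that bounded component (a ball of radius ε is caged by S). -/

import Mathlib

open Metric Set Bornology

private lemma aux_eq_of_sq {a b : ℝ} (ha : 0 ≤ a) (hb : 0 ≤ b) (h : a^2 = b^2) : a = b := by
  rw [← Real.sqrt_sq ha, h, Real.sqrt_sq hb]

private lemma aux_lt_of_sq {a b : ℝ} (ha : 0 ≤ a) (hb : 0 ≤ b) (h : a^2 < b^2) : a < b := by
  nlinarith

private lemma aux_le_of_sq {a b : ℝ} (ha : 0 ≤ a) (hb : 0 ≤ b) (h : a^2 ≤ b^2) : a ≤ b := by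
  nlinarith

set_option maxHeartbeats 12000000 in
theorem sphere_with_cap_removed_unique_bounded_component
    (r θ ε : ℝ) (hr : 0 < r) (hθ : θ ∈ Set.Ioo 0 (Real.pi / 2))
    (S : Set (EuclideanSpace ℝ (Fin 3)))
    (hS : S = {p : EuclideanSpace ℝ (Fin 3) | ‖p‖ = r ∧ p 2 ≤ r * Real.sin θ})
    (hε1 : r * Real.cos θ ≤ ε) (hε2 : ε < r) :
    (∃! C : Set (EuclideanSpace ℝ (Fin 3)),
        (∃ p ∈ (Metric.cthickening ε S)ᶜ,
          C = connectedComponentIn (Metric.cthickening ε S)ᶜ p) ∧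
        Bornology.IsBounded C) ∧
      (0 : EuclideanSpace ℝ (Fin 3)) ∈ (Metric.cthickening ε S)ᶜ ∧
      Bornology.IsBounded
        (connectedComponentIn (Metric.cthickening ε S)ᶜ
          (0 : EuclideanSpace ℝ (Fin 3))) := by
  have hπ := Real.pi_pos
  have hθ1 : 0 < θ := hθ.1
  have hθ2 : θ < Real.pi / 2 := hθ.2
  have hsin : 0 < Real.sin θ := Real.sin_pos_of_pos_of_lt_pi hθ1 (by linarith)
  have hcos : 0 < Real.cos θ := Real.cos_pos_of_mem_Ioo ⟨by linarith, hθ2⟩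
  have pyth := Real.sin_sq_add_cos_sq θ
  have pythr : r^2 * Real.sin θ^2 + r^2 * Real.cos θ^2 = r^2 := by
    linear_combination r^2 * pyth
  have hε0 : 0 < ε := lt_of_lt_of_le (mul_pos hr hcos) hε1
  have hSmem : ∀ w : EuclideanSpace ℝ (Fin 3),
      w ∈ S ↔ ‖w‖ = r ∧ w 2 ≤ r * Real.sin θ := by
    intro w; rw [hS]; rfl
  have hnorm2 : ∀ x : EuclideanSpace ℝ (Fin 3), ‖x‖^2 = x 0^2 + x 1^2 + x 2^2 := by
    intro x
    rw [EuclideanSpace.norm_eq, Real.sq_sqrt (by positivity)]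
    simp [Fin.sum_univ_three, sq_abs]
  have hdist2 : ∀ x w : EuclideanSpace ℝ (Fin 3),
      dist x w^2 = (x 0 - w 0)^2 + (x 1 - w 1)^2 + (x 2 - w 2)^2 := by
    intro x w
    rw [EuclideanSpace.dist_eq, Real.sq_sqrt (by positivity)]
    simp [Fin.sum_univ_three, Real.dist_eq, sq_abs]
  -- compactness of S
  have hScpt : IsCompact S := by
    have : S = Metric.sphere (0 : EuclideanSpace ℝ (Fin 3)) r ∩
        {w : EuclideanSpace ℝ (Fin 3) | w 2 ≤ r * Real.sin θ} := by
      ext w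
      simp [hSmem, mem_sphere_zero_iff_norm]
    rw [this]
    exact (isCompact_sphere 0 r).inter_right
      (isClosed_le (by fun_prop) continuous_const)
  set K := (Metric.cthickening ε S)ᶜ with hKdef
  have hmemT : ∀ x : EuclideanSpace ℝ (Fin 3),
      x ∈ Metric.cthickening ε S ↔ ∃ w ∈ S, dist x w ≤ ε := by
    intro x
    rw [hScpt.cthickening_eq_biUnion_closedBall hε0.le]
    simp [mem_closedBall]
  have hmemK : ∀ x : EuclideanSpace ℝ (Fin 3),
      x ∈ K ↔ ∀ w ∈ S, ε < dist x w := by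
    intro x
    rw [hKdef, mem_compl_iff, hmemT]
    push_neg
    rfl
  -- rim point construction
  have hrim : ∀ x : EuclideanSpace ℝ (Fin 3), ∃ w ∈ S,
      dist x w^2 = (Real.sqrt (x 0^2 + x 1^2) - r * Real.cos θ)^2
        + (x 2 - r * Real.sin θ)^2 := by
    intro x
    set a := Real.sqrt (x 0^2 + x 1^2) with hadef
    have ha2 : a^2 = x 0^2 + x 1^2 := Real.sq_sqrt (by positivity)
    obtain ⟨u0, u1, hu, hx0, hx1⟩ : ∃ u0 u1 : ℝ,
        u0^2 + u1^2 = 1 ∧ x 0 = a * u0 ∧ x 1 = a * u1 := by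
      by_cases hA : a = 0
      · have h0 : x 0^2 = 0 := le_antisymm (by nlinarith [sq_nonneg (x 1)]) (sq_nonneg _)
        have h1 : x 1^2 = 0 := le_antisymm (by nlinarith [sq_nonneg (x 0)]) (sq_nonneg _)
        have hx00 : x 0 = 0 := by
          have := sq_eq_zero_iff.mp h0; exact this
        have hx10 : x 1 = 0 := by
          have := sq_eq_zero_iff.mp h1; exact this
        exact ⟨1, 0, by norm_num, by rw [hx00, hA]; ring, by rw [hx10, hA]; ring⟩
      · refine ⟨x 0 / a, x 1 / a, ?_, ?_, ?_⟩
        · field_simp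
          linarith [ha2]
        · field_simp
        · field_simp
    refine ⟨(WithLp.equiv 2 (Fin 3 → ℝ)).symm
      ![r * Real.cos θ * u0, r * Real.cos θ * u1, r * Real.sin θ], ?_, ?_⟩
    · rw [hSmem]
      constructor
      · apply aux_eq_of_sq (norm_nonneg _) hr.le
        rw [hnorm2]
        simp [WithLp.equiv_symm_apply, PiLp.toLp_apply]
        linear_combination (r * Real.cos θ)^2 * hu + r^2 * pyth
      · simp [WithLp.equiv_symm_apply, PiLp.toLp_apply]
    · rw [hdist2]
      simp only [WithLp.equiv_symm_apply, PiLp.toLp_apply, Matrix.cons_val_zero, Matrix.cons_val_one,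
        Matrix.head_cons, Matrix.cons_val_two, Matrix.tail_cons]
      rw [hx0, hx1]
      linear_combination (a - r * Real.cos θ)^2 * hu
  -- 0 is in the complement
  have h0K : (0 : EuclideanSpace ℝ (Fin 3)) ∈ K := by
    rw [hmemK]
    intro w hwS
    have := (hSmem w).mp hwS
    have : dist (0 : EuclideanSpace ℝ (Fin 3)) w = r := by
      rw [dist_comm, dist_zero_right, this.1]
    linarith
  -- the set U
  set U := {q : EuclideanSpace ℝ (Fin 3) | ‖q‖ < r} ∩
    {q : EuclideanSpace ℝ (Fin 3) | q 2 < r * Real.sin θ} with hUdef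
  have hUopen : IsOpen U :=
    (isOpen_lt continuous_norm continuous_const).inter
      (isOpen_lt (by fun_prop) continuous_const)
  have h0U : (0 : EuclideanSpace ℝ (Fin 3)) ∈ U := by
    constructor
    · simp [hr]
    · show (0 : EuclideanSpace ℝ (Fin 3)) 2 < r * Real.sin θ
      have h00 : (0 : EuclideanSpace ℝ (Fin 3)) 2 = 0 := by simp
      rw [h00]
      positivity
  -- frontier argument
  have hfront : ∀ x : EuclideanSpace ℝ (Fin 3), x ∈ K → x ∈ closure U → x ∈ U := by
    intro x hxK hxcl
    have hVsub : closure U ⊆ {q : EuclideanSpace ℝ (Fin 3) | ‖q‖ ≤ r} ∩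
        {q : EuclideanSpace ℝ (Fin 3) | q 2 ≤ r * Real.sin θ} := by
      apply closure_minimal
      · rintro q ⟨h1, h2⟩
        have h1' : ‖q‖ < r := h1
        have h2' : q 2 < r * Real.sin θ := h2
        exact ⟨h1'.le, h2'.le⟩
      · exact (isClosed_le continuous_norm continuous_const).inter
          (isClosed_le (by fun_prop) continuous_const)
    have hxV := hVsub hxcl
    have hx1 : ‖x‖ ≤ r := hxV.1
    have hx2 : x 2 ≤ r * Real.sin θ := hxV.2
    have hxKd := (hmemK x).mp hxK
    constructor
    · rcases lt_or_eq_of_le hx1 with h | h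
      · exact h
      · exfalso
        have hxS : x ∈ S := (hSmem x).mpr ⟨h, hx2⟩
        have := hxKd x hxS
        rw [dist_self] at this
        linarith
    · rcases lt_or_eq_of_le hx2 with h | h
      · exact h
      · exfalso
        obtain ⟨w, hwS, hwd⟩ := hrim x
        have hd := hxKd w hwS
        have hd2 : ε^2 < dist x w^2 := by nlinarith [dist_nonneg (x := x) (y := w)]
        rw [hwd] at hd2
        set a := Real.sqrt (x 0^2 + x 1^2) with hadef
        have ha2 : a^2 = x 0^2 + x 1^2 := Real.sq_sqrt (by positivity)
        have ha0 : 0 ≤ a := Real.sqrt_nonneg _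
        have hxn : ‖x‖^2 = x 0^2 + x 1^2 + x 2^2 := hnorm2 x
        have hxr2 : ‖x‖^2 ≤ r^2 := by nlinarith [norm_nonneg x]
        have haler : a ≤ r * Real.cos θ := by
          apply aux_le_of_sq ha0 (by positivity)
          have e1 : a^2 = ‖x‖^2 - x 2^2 := by rw [ha2, hxn]; ring
          rw [e1, h]
          nlinarith [hxr2, pythr]
        have hrc2 : (r * Real.cos θ)^2 ≤ ε^2 := by
          nlinarith [mul_nonneg hr.le hcos.le]
        nlinarith [sq_nonneg (a - r * Real.cos θ), mul_nonneg ha0 (sub_nonneg.mpr haler)]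
  -- bounded component of 0
  have hC0K : connectedComponentIn K 0 ⊆ K := connectedComponentIn_subset _ _
  have h0C0 : (0 : EuclideanSpace ℝ (Fin 3)) ∈ connectedComponentIn K 0 :=
    mem_connectedComponentIn h0K
  have hC0U : connectedComponentIn K 0 ⊆ U := by
    apply IsPreconnected.subset_left_of_subset_union hUopen
      (isOpen_compl_iff.mpr isClosed_closure)
      (disjoint_compl_right.mono_left subset_closure)
    · intro x hx
      by_cases hcl : x ∈ closure U
      · exact Or.inl (hfront x (hC0K hx) hcl)
      · exact Or.inr hcl
    · exact ⟨0, h0C0, h0U⟩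
    · exact isPreconnected_connectedComponentIn
  have hC0bdd : IsBounded (connectedComponentIn K 0) := by
    apply (isBounded_ball (x := (0 : EuclideanSpace ℝ (Fin 3))) (r := r)).subset
    intro x hx
    exact mem_ball_zero_iff.mpr (hC0U hx).1
  -- Step A
  have hA : ∀ p : EuclideanSpace ℝ (Fin 3), p ∈ K → ‖p‖ < r → p 2 < r * Real.sin θ →
      ‖p‖^2 + ε^2 < r^2 := by
    intro p hpK hp1 hp2
    have hpKd := (hmemK p).mp hpK
    set s := ‖p‖ with hsdef
    have hs0 : 0 ≤ s := norm_nonneg p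
    have hs2 : s^2 = p 0^2 + p 1^2 + p 2^2 := hnorm2 p
    by_cases hps : p = 0
    · have : s = 0 := by rw [hsdef, hps, norm_zero]
      nlinarith
    have hsp : 0 < s := norm_pos_iff.mpr hps
    by_cases hcase : p 2 ≤ s * Real.sin θ
    · -- radial witness
      have hwS : (r / s) • p ∈ S := by
        rw [hSmem]
        constructor
        · rw [norm_smul, Real.norm_eq_abs, abs_of_pos (div_pos hr hsp), ← hsdef,
            div_mul_cancel₀ _ hsp.ne']
        · have hcoord : ((r / s) • p) 2 = (r / s) * p 2 := rfl
          rw [hcoord]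
          rw [div_mul_eq_mul_div, div_le_iff₀ hsp]
          nlinarith
      have hd := hpKd _ hwS
      have hdeq : dist p ((r / s) • p) = r - s := by
        rw [dist_eq_norm]
        have : p - (r / s) • p = (1 - r / s) • p := by
          rw [sub_smul, one_smul]
        rw [this, norm_smul, Real.norm_eq_abs, ← hsdef]
        have h1 : 1 - r / s < 0 := by
          have : 1 < r / s := (one_lt_div hsp).mpr hp1
          linarith
        rw [abs_of_neg h1]
        field_simp
        ring
      rw [hdeq] at hd
      nlinarith
    · push_neg at hcase
      have hh0 : 0 < p 2 := lt_of_le_of_lt (by positivity) hcase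
      obtain ⟨w, hwS, hwd⟩ := hrim p
      set a := Real.sqrt (p 0^2 + p 1^2) with hadef
      have ha2 : a^2 = p 0^2 + p 1^2 := Real.sq_sqrt (by positivity)
      have ha0 : 0 ≤ a := Real.sqrt_nonneg _
      have hsum : a^2 + p 2^2 = s^2 := by rw [hs2, ha2]
      have hacos : a < s * Real.cos θ := by
        apply aux_lt_of_sq ha0 (by positivity)
        have h1 : (s * Real.sin θ)^2 < p 2^2 := by
          nlinarith [mul_nonneg hs0 hsin.le]
        have pyths : s^2 * Real.sin θ^2 + s^2 * Real.cos θ^2 = s^2 := by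
          linear_combination s^2 * pyth
        nlinarith [pyths]
      have harc : a ≤ r * Real.cos θ := by nlinarith
      have key : s^2 < a * (r * Real.cos θ) + p 2 * (r * Real.sin θ) := by
        nlinarith [mul_nonneg ha0 (sub_nonneg.mpr harc),
          mul_pos hh0 (sub_pos.mpr hp2)]
      have hd := hpKd w hwS
      have hd2 : ε^2 < dist p w^2 := by nlinarith [dist_nonneg (x := p) (y := w)]
      rw [hwd] at hd2
      nlinarith [pythr, key, hsum]
  -- Step B : segment to origin stays in K
  have hB : ∀ p : EuclideanSpace ℝ (Fin 3), p ∈ K → ‖p‖ < r → p 2 < r * Real.sin θ →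
      ∀ t : ℝ, 0 ≤ t → t ≤ 1 → (t • p) ∈ K := by
    intro p hpK hp1 hp2 t ht0 ht1
    have hAp : ‖p‖^2 + ε^2 < r^2 := hA p hpK hp1 hp2
    rw [hnorm2] at hAp
    have hpKd := (hmemK p).mp hpK
    rw [hmemK]
    intro w hwS
    have hw1 : ‖w‖ = r := ((hSmem w).mp hwS).1
    have hw2 : w 0^2 + w 1^2 + w 2^2 = r^2 := by rw [← hnorm2, hw1]
    have hd := hpKd w hwS
    have hpw : ε^2 < (p 0 - w 0)^2 + (p 1 - w 1)^2 + (p 2 - w 2)^2 := by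
      rw [← hdist2]
      nlinarith [dist_nonneg (x := p) (y := w)]
    apply aux_lt_of_sq hε0.le dist_nonneg
    rw [hdist2]
    have hc0 : (t • p) 0 = t * p 0 := by simp
    have hc1 : (t • p) 1 = t * p 1 := by simp
    have hc2 : (t • p) 2 = t * p 2 := by simp
    rw [hc0, hc1, hc2]
    have hs2nn : (0:ℝ) ≤ p 0^2 + p 1^2 + p 2^2 := by positivity
    rcases le_or_gt (p 0^2 + p 1^2 + p 2^2) (p 0 * w 0 + p 1 * w 1 + p 2 * w 2) with hc | hc
    · nlinarith [mul_nonneg (sub_nonneg.mpr ht1)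
        (sub_nonneg.mpr hc),
        mul_nonneg (mul_nonneg (sub_nonneg.mpr ht1) (sub_nonneg.mpr ht1)) hs2nn]
    · rcases le_or_gt (p 0 * w 0 + p 1 * w 1 + p 2 * w 2) 0 with hcc | hcc
      · nlinarith [mul_nonneg ht0 (neg_nonneg.mpr hcc), sq_nonneg (t * p 0),
          sq_nonneg (t * p 1), sq_nonneg (t * p 2)]
      · have hs2pos : (0:ℝ) < p 0^2 + p 1^2 + p 2^2 := lt_trans hcc hc
        nlinarith [sq_nonneg (t * (p 0^2 + p 1^2 + p 2^2)
            - (p 0 * w 0 + p 1 * w 1 + p 2 * w 2)),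
          mul_pos hcc (sub_pos.mpr hc),
          mul_pos (sub_pos.mpr hc) hs2pos,
          mul_pos hs2pos (show (0:ℝ) < r^2 - (p 0^2 + p 1^2 + p 2^2) - ε^2 by linarith)]
  -- outward ray
  have hray1 : ∀ p : EuclideanSpace ℝ (Fin 3), p ∈ K → r ≤ ‖p‖ →
      ∀ t : ℝ, 1 ≤ t → (t • p) ∈ K := by
    intro p hpK hpr t ht
    have hpKd := (hmemK p).mp hpK
    rw [hmemK]
    intro w hwS
    have hw1 : ‖w‖ = r := ((hSmem w).mp hwS).1
    have hw2 : w 0^2 + w 1^2 + w 2^2 = r^2 := by rw [← hnorm2, hw1]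
    have hd := hpKd w hwS
    have hpw : ε^2 < (p 0 - w 0)^2 + (p 1 - w 1)^2 + (p 2 - w 2)^2 := by
      rw [← hdist2]
      nlinarith [dist_nonneg (x := p) (y := w)]
    have hrs2 : r^2 ≤ p 0^2 + p 1^2 + p 2^2 := by
      rw [← hnorm2]
      nlinarith [norm_nonneg p]
    have hCS : (p 0 * w 0 + p 1 * w 1 + p 2 * w 2)^2
        ≤ (p 0^2 + p 1^2 + p 2^2) * (w 0^2 + w 1^2 + w 2^2) := by
      nlinarith [sq_nonneg (p 0 * w 1 - p 1 * w 0), sq_nonneg (p 0 * w 2 - p 2 * w 0),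
        sq_nonneg (p 1 * w 2 - p 2 * w 1)]
    have hs2nn : (0:ℝ) ≤ p 0^2 + p 1^2 + p 2^2 := by positivity
    have hCS2 : (p 0 * w 0 + p 1 * w 1 + p 2 * w 2)^2
        ≤ (p 0^2 + p 1^2 + p 2^2)^2 := by
      rw [hw2] at hCS
      have h3 : (p 0^2 + p 1^2 + p 2^2) * r^2 ≤ (p 0^2 + p 1^2 + p 2^2)^2 := by
        have := mul_le_mul_of_nonneg_left hrs2 hs2nn
        nlinarith [this]
      linarith
    have hc : p 0 * w 0 + p 1 * w 1 + p 2 * w 2 ≤ p 0^2 + p 1^2 + p 2^2 := by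
      nlinarith [hCS2, hs2nn]
    apply aux_lt_of_sq hε0.le dist_nonneg
    rw [hdist2]
    have hc0 : (t • p) 0 = t * p 0 := by simp
    have hc1 : (t • p) 1 = t * p 1 := by simp
    have hc2 : (t • p) 2 = t * p 2 := by simp
    rw [hc0, hc1, hc2]
    nlinarith [mul_nonneg (sub_nonneg.mpr ht) (sub_nonneg.mpr hc),
      mul_nonneg (mul_nonneg (sub_nonneg.mpr ht) (sub_nonneg.mpr ht)) hs2nn]
  -- vertical ray
  have hray2 : ∀ p : EuclideanSpace ℝ (Fin 3), p ∈ K → r * Real.sin θ ≤ p 2 →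
      ∀ t : ℝ, 0 ≤ t →
        (p + t • EuclideanSpace.single (2 : Fin 3) (1:ℝ)) ∈ K := by
    intro p hpK hp2 t ht
    have hpKd := (hmemK p).mp hpK
    rw [hmemK]
    intro w hwS
    have hwS' := (hSmem w).mp hwS
    have hd := hpKd w hwS
    have hpw : ε^2 < (p 0 - w 0)^2 + (p 1 - w 1)^2 + (p 2 - w 2)^2 := by
      rw [← hdist2]
      nlinarith [dist_nonneg (x := p) (y := w)]
    apply aux_lt_of_sq hε0.le dist_nonneg
    rw [hdist2]
    have hc0 : (p + t • EuclideanSpace.single (2 : Fin 3) (1:ℝ)) 0 = p 0 := by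
      simp [EuclideanSpace.single_apply]
    have hc1 : (p + t • EuclideanSpace.single (2 : Fin 3) (1:ℝ)) 1 = p 1 := by
      simp [EuclideanSpace.single_apply]
    have hc2 : (p + t • EuclideanSpace.single (2 : Fin 3) (1:ℝ)) 2 = p 2 + t := by
      simp [EuclideanSpace.single_apply]
    rw [hc0, hc1, hc2]
    have hw2p : w 2 ≤ p 2 := le_trans hwS'.2 hp2
    nlinarith [mul_nonneg ht (sub_nonneg.mpr hw2p), sq_nonneg t]
  -- Assemble
  refine ⟨⟨connectedComponentIn K 0, ⟨⟨0, h0K, rfl⟩, hC0bdd⟩, ?_⟩, h0K, hC0bdd⟩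
  rintro C ⟨⟨p, hpK, rfl⟩, hCb⟩
  by_cases hpU : ‖p‖ < r ∧ p 2 < r * Real.sin θ
  · -- segment from p to 0 in K
    have hseg : (fun t : ℝ => t • p) '' Icc 0 1 ⊆ K := by
      rintro x ⟨t, ht, rfl⟩
      exact hB p hpK hpU.1 hpU.2 t ht.1 ht.2
    have hconn : IsPreconnected ((fun t : ℝ => t • p) '' Icc 0 1) :=
      isPreconnected_Icc.image _ (Continuous.continuousOn
        (continuous_id.smul continuous_const))
    have hpmem : p ∈ (fun t : ℝ => t • p) '' Icc 0 1 :=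
      ⟨1, ⟨zero_le_one, le_refl 1⟩, one_smul ℝ p⟩
    have hsub := hconn.subset_connectedComponentIn hpmem hseg
    have h0mem : (0 : EuclideanSpace ℝ (Fin 3)) ∈ connectedComponentIn K p :=
      hsub ⟨0, ⟨le_refl 0, zero_le_one⟩, zero_smul ℝ p⟩
    exact connectedComponentIn_eq h0mem
  · exfalso
    rcases le_or_gt r ‖p‖ with hge | hlt
    · -- outward ray, unbounded
      have hrayK : (fun t : ℝ => t • p) '' Ici 1 ⊆ K := by
        rintro x ⟨t, ht, rfl⟩
        exact hray1 p hpK hge t ht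
      have hconn : IsPreconnected ((fun t : ℝ => t • p) '' Ici 1) :=
        isPreconnected_Ici.image _ (Continuous.continuousOn
          (continuous_id.smul continuous_const))
      have hpmem : p ∈ (fun t : ℝ => t • p) '' Ici 1 := ⟨1, mem_Ici.mpr (le_refl 1), one_smul ℝ p⟩
      have hsub := hconn.subset_connectedComponentIn hpmem hrayK
      have hbdd := hCb.subset hsub
      rw [isBounded_iff_forall_norm_le] at hbdd
      obtain ⟨M, hM⟩ := hbdd
      have ht1 : (1:ℝ) ≤ max 1 ((M + 1) / r) := le_max_left _ _
      have := hM _ ⟨max 1 ((M + 1) / r), ht1, rfl⟩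
      rw [norm_smul, Real.norm_eq_abs, abs_of_nonneg (by linarith : (0:ℝ) ≤ max 1 ((M+1)/r))] at this
      have h1 : max 1 ((M + 1) / r) * r ≤ max 1 ((M + 1) / r) * ‖p‖ :=
        mul_le_mul_of_nonneg_left hge (by linarith)
      have h2 : (M + 1) / r * r ≤ max 1 ((M + 1) / r) * r :=
        mul_le_mul_of_nonneg_right (le_max_right _ _) hr.le
      rw [div_mul_cancel₀ _ hr.ne'] at h2
      linarith
    · -- vertical ray, unbounded
      have hp2 : r * Real.sin θ ≤ p 2 := le_of_not_gt fun h => hpU ⟨hlt, h⟩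
      set e3 := EuclideanSpace.single (2 : Fin 3) (1:ℝ) with he3
      have hrayK : (fun t : ℝ => p + t • e3) '' Ici 0 ⊆ K := by
        rintro x ⟨t, ht, rfl⟩
        exact hray2 p hpK hp2 t ht
      have hconn : IsPreconnected ((fun t : ℝ => p + t • e3) '' Ici 0) :=
        isPreconnected_Ici.image _ (Continuous.continuousOn
          (continuous_const.add (continuous_id.smul continuous_const)))
      have hpmem : p ∈ (fun t : ℝ => p + t • e3) '' Ici 0 :=
        ⟨0, mem_Ici.mpr (le_refl 0), by simp⟩
      have hsub := hconn.subset_connectedComponentIn hpmem hrayK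
      have hbdd := hCb.subset hsub
      rw [isBounded_iff_forall_norm_le] at hbdd
      obtain ⟨M, hM⟩ := hbdd
      set t := |M| + ‖p‖ + 1 with htdef
      have ht0 : (0:ℝ) ≤ t := by positivity
      have hMt := hM _ ⟨t, ht0, rfl⟩
      have he3n : ‖e3‖ = 1 := by simp [he3]
      have hkey : ‖t • e3‖ ≤ ‖p + t • e3‖ + ‖p‖ := by
        have := norm_sub_le (p + t • e3) p
        simpa using this
      rw [norm_smul, Real.norm_eq_abs, abs_of_nonneg ht0, he3n, mul_one] at hkey
      have : M ≤ |M| := le_abs_self M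
      linarith
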